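/- With notation as in the Kumar criterion computation for ramified SU₃ (Case A): setting A_l := ∑_{i=0}^{2l-1} s_{1,i}(α₀)⁻¹ · s_{1,i}(α₁)⁻¹ in the fraction field Q of the symmetric algebra on the affine root lattice, one has A_l = 4l · α₀⁻¹ · s_{1,2l-1}(α₀)⁻¹ for every l ≥ 1. -/

import Mathlib

/-! Kumar-criterion computation for the ramified `SU₃`, Case A (absolutely special vertex):
`A_l = ∑_{i=0}^{2l-1} s_{1,i}(α₀)⁻¹ s_{1,i}(α₁)⁻¹ = 4l · α₀⁻¹ · s_{1,2l-1}(α₀)⁻¹`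
in the fraction field of the symmetric algebra of the affine root lattice `ℤα₀ ⊕ ℤα₁`.

We represent an element `a·α₀ + b·α₁` of the root lattice by `(a, b) : ℤ × ℤ`, acted on by
the reflections `s₀, s₁` via `s₁(α₁) = -α₁`, `s₀(α₀) = -α₀`, `s₀(α₁) = α₁+α₀`,
`s₁(α₀) = α₀+4α₁`, and evaluate in the fraction field of `ℚ[α₀, α₁]` (two independent
transcendental generators). -/

noncomputable section

/-- `s₀` on the affine root lattice in the basis `(α₀, α₁)`. -/
def s0 : ℤ × ℤ → ℤ × ℤ := fun p => (-p.1 + p.2, p.2)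

/-- `s₁` on the affine root lattice in the basis `(α₀, α₁)`. -/
def s1 : ℤ × ℤ → ℤ × ℤ := fun p => (p.1, 4 * p.1 - p.2)

/-- `s_m`: `s₀` for even `m`, `s₁` for odd `m`. -/
def sref (m : ℕ) : ℤ × ℤ → ℤ × ℤ := if Even m then s0 else s1

/-- `sseq start len = s_{start} ⋯ s_{start+len-1}` (so `s_{i,j} = sseq i (j+1-i)`). -/
def sseq (start len : ℕ) : ℤ × ℤ → ℤ × ℤ :=
  fun v => (List.range' start len).foldr (fun m w => sref m w) v

/-- the fraction field `Q` of the symmetric algebra `ℚ[α₀, α₁]`. -/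
abbrev Qfield : Type := FractionRing (MvPolynomial (Fin 2) ℚ)

/-- `α₀` as an element of `Q`. -/
def A0 : Qfield := algebraMap (MvPolynomial (Fin 2) ℚ) Qfield (MvPolynomial.X 0)

/-- `α₁` as an element of `Q`. -/
def A1 : Qfield := algebraMap (MvPolynomial (Fin 2) ℚ) Qfield (MvPolynomial.X 1)

/-- evaluation of a root-lattice element `a·α₀ + b·α₁` in `Q`. -/
def ev (p : ℤ × ℤ) : Qfield := p.1 • A0 + p.2 • A1

def UV : ℕ → (ℤ × ℤ) × (ℤ × ℤ)
  | 0 => ((1, 0), (0, 1))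
  | (i + 1) =>
      if Even i then ((UV i).1 + 4 • (UV i).2, -(UV i).2)
      else (-(UV i).1, (UV i).1 + (UV i).2)

lemma UV_succ (i : ℕ) : UV (i + 1) =
    (if Even i then ((UV i).1 + 4 • (UV i).2, -(UV i).2)
     else (-(UV i).1, (UV i).1 + (UV i).2)) := rfl

lemma sseq_succ (i : ℕ) (p : ℤ × ℤ) : sseq 1 (i + 1) p = sseq 1 i (sref (1 + i) p) := by
  simp [sseq, List.range'_concat, List.foldr_append]

lemma sseq_lin (i : ℕ) (p : ℤ × ℤ) :
    sseq 1 i p = p.1 • (UV i).1 + p.2 • (UV i).2 := by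
  induction i generalizing p with
  | zero =>
    simp only [sseq, List.range', List.foldr, UV]
    ext <;> simp
  | succ i ih =>
    rw [sseq_succ, ih]
    rcases Nat.even_or_odd i with h | h
    · have h1 : ¬ Even (1 + i) := by
        rw [Nat.even_iff] at h ⊢; omega
      simp only [sref, if_neg h1, s1, UV_succ, if_pos h]
      ext <;> simp [Prod.fst_add, Prod.snd_add] <;> ring
    · have h2 : ¬ Even i := by rw [Nat.even_iff]; rw [Nat.odd_iff] at h; omega
      have h1 : Even (1 + i) := by rw [Nat.even_iff]; rw [Nat.odd_iff] at h; omega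
      simp only [sref, if_pos h1, s0, UV_succ, if_neg h2]
      ext <;> simp [Prod.fst_add, Prod.snd_add] <;> ring

lemma UV_val (k : ℕ) :
    UV (2 * k) = ((1 - 2 * (k : ℤ), -(4 * (k : ℤ))), ((k : ℤ), 2 * (k : ℤ) + 1)) ∧
    UV (2 * k + 1) = ((2 * (k : ℤ) + 1, 4 * (k : ℤ) + 4), (-(k : ℤ), -(2 * (k : ℤ) + 1))) := by
  induction k with
  | zero =>
    constructor
    · norm_num [UV]
    · norm_num [UV]
  | succ k ih =>
    have hodd : ¬ Even (2 * k + 1) := by rw [Nat.even_iff]; omega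
    have heven : Even (2 * k + 2) := by rw [Nat.even_iff]; omega
    have hA : UV (2 * (k + 1)) =
        ((1 - 2 * ((k : ℤ) + 1), -(4 * ((k : ℤ) + 1))), (((k : ℤ) + 1), 2 * ((k : ℤ) + 1) + 1)) := by
      have e1 : 2 * (k + 1) = (2 * k + 1) + 1 := by ring
      rw [e1, UV_succ, if_neg hodd, ih.2]
      ext <;> simp only [Prod.fst_add, Prod.snd_add, Prod.fst_neg, Prod.snd_neg, Prod.smul_fst, Prod.smul_snd, smul_eq_mul] <;> push_cast <;> ring
    constructor
    · rw [hA]; ext <;> simp only [Prod.fst_add, Prod.snd_add, Prod.fst_neg, Prod.snd_neg, Prod.smul_fst, Prod.smul_snd, smul_eq_mul] <;> push_cast <;> ring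
    · have e2 : 2 * (k + 1) + 1 = (2 * k + 2) + 1 := by ring
      have e3 : (2 * k + 2 : ℕ) = 2 * (k + 1) := by ring
      rw [e2, UV_succ, if_pos heven, e3, hA]
      ext <;> simp only [Prod.fst_add, Prod.snd_add, Prod.fst_neg, Prod.snd_neg, Prod.smul_fst, Prod.smul_snd, smul_eq_mul] <;> push_cast <;> ring

lemma sseq_u (i : ℕ) : sseq 1 i (1, 0) = (UV i).1 := by
  rw [sseq_lin]; simp

lemma sseq_v (i : ℕ) : sseq 1 i (0, 1) = (UV i).2 := by
  rw [sseq_lin]; simp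

lemma ev_def (a b : ℤ) : ev (a, b) = (a : Qfield) * A0 + (b : Qfield) * A1 := by
  simp [ev, zsmul_eq_mul]

lemma ev_ne (a b : ℤ) (h : a ≠ 0 ∨ b ≠ 0) : ev (a, b) ≠ 0 := by
  have hrw : ev (a, b) = algebraMap (MvPolynomial (Fin 2) ℚ) Qfield
      (a • MvPolynomial.X 0 + b • MvPolynomial.X 1) := by
    simp [ev, A0, A1, map_add, map_zsmul]
  rw [hrw]
  intro hc
  have hp : (a • MvPolynomial.X 0 + b • MvPolynomial.X 1 : MvPolynomial (Fin 2) ℚ) = 0 :=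
    IsFractionRing.injective (MvPolynomial (Fin 2) ℚ) Qfield (by simpa using hc)
  have h1 := congrArg (MvPolynomial.eval (fun j : Fin 2 => if j = 0 then (1 : ℚ) else 0)) hp
  have h2 := congrArg (MvPolynomial.eval (fun j : Fin 2 => if j = 1 then (1 : ℚ) else 0)) hp
  simp [map_zsmul, MvPolynomial.eval_X] at h1 h2
  rcases h with h | h <;> simp_all

lemma lin_ne (a b : ℤ) (h : a ≠ 0 ∨ b ≠ 0) :
    (a : Qfield) * A0 + (b : Qfield) * A1 ≠ 0 := by
  have := ev_ne a b h; rwa [ev_def] at this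

lemma key_field {F : Type*} [Field F] (x y K : F) (hx : x ≠ 0)
    (hP : (2*K+1)*x + (4*K+4)*y ≠ 0)
    (hR : (K+1)*x + (2*(K+1)+1)*y ≠ 0)
    (hS : (2*(K+1)+1)*x + (4*(K+1)+4)*y ≠ 0) :
    (4*(K+1)) * (x⁻¹ * ((2*K+1)*x+(4*K+4)*y)⁻¹)
      + ((1-2*(K+1))*x + (-(4*(K+1)))*y)⁻¹ * ((K+1)*x + (2*(K+1)+1)*y)⁻¹
      + ((2*(K+1)+1)*x+(4*(K+1)+4)*y)⁻¹ * ((-(K+1))*x + (-(2*(K+1)+1))*y)⁻¹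
    = (4*(K+1+1)) * (x⁻¹ * ((2*(K+1)+1)*x+(4*(K+1)+4)*y)⁻¹) := by
  have e1 : (1-2*(K+1))*x + (-(4*(K+1)))*y = -((2*K+1)*x + (4*K+4)*y) := by ring
  have e2 : (-(K+1))*x + (-(2*(K+1)+1))*y = -((K+1)*x + (2*(K+1)+1)*y) := by ring
  rw [e1, e2, inv_neg, inv_neg]
  have hE : 4*(K+1)*((K+1)*x + (2*(K+1)+1)*y)*((2*(K+1)+1)*x + (4*(K+1)+4)*y)
      - x*((2*(K+1)+1)*x + (4*(K+1)+4)*y) - x*((2*K+1)*x + (4*K+4)*y)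
      = 4*(K+1+1)*((2*K+1)*x + (4*K+4)*y)*((K+1)*x + (2*(K+1)+1)*y) := by ring
  generalize (2*K+1)*x + (4*K+4)*y = P at hP hE ⊢
  generalize (K+1)*x + (2*(K+1)+1)*y = R at hR hE ⊢
  generalize (2*(K+1)+1)*x + (4*(K+1)+4)*y = S at hS hE ⊢
  field_simp
  linear_combination hE

lemma qsmul_nat (n : ℕ) (x : Qfield) : ((n : ℚ)) • x = (n : Qfield) * x := by
  exact_mod_cast (Nat.cast_smul_eq_nsmul ℚ n x).trans (nsmul_eq_mul n x)

lemma smul4 (m : ℕ) (z : Qfield) : (4 * (m : ℚ)) • z = ((4 * m : ℕ) : Qfield) * z := by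
  have h := qsmul_nat (4 * m) z
  push_cast at h ⊢
  exact h


set_option maxHeartbeats 2000000 in
/-- Case A: `A_l := ∑_{i=0}^{2l-1} s_{1,i}(α₀)⁻¹ s_{1,i}(α₁)⁻¹` equals
`4l · α₀⁻¹ · s_{1,2l-1}(α₀)⁻¹` for every `l ≥ 1`.  (Here `s_{1,i} = sseq 1 i`.) -/
theorem caseA_sum (l : ℕ) (hl : 1 ≤ l) :
    ∑ i ∈ Finset.range (2 * l),
        (ev (sseq 1 i (1, 0)))⁻¹ * (ev (sseq 1 i (0, 1)))⁻¹
      = (4 * l : ℚ) • ((ev (1, 0))⁻¹ * (ev (sseq 1 (2 * l - 1) (1, 0)))⁻¹) := by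
  have hx : A0 ≠ 0 := by
    have := lin_ne 1 0 (Or.inl one_ne_zero); simpa using this
  have hy : A1 ≠ 0 := by
    have := lin_ne 0 1 (Or.inr one_ne_zero); simpa using this
  have hev10 : ev (1, 0) = A0 := by rw [ev_def]; push_cast; ring
  induction l, hl using Nat.le_induction with
  | base =>
    have hUV1 : UV 1 = ((1, 4), (0, -1)) := by
      have := (UV_val 0).2; norm_num at this; exact this
    rw [show (2 * 1 : ℕ) = 0 + 1 + 1 from rfl, Finset.sum_range_succ, Finset.sum_range_succ,
      Finset.sum_range_zero, show (2 * 1 - 1 : ℕ) = 1 from rfl]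
    simp only [sseq_u, sseq_v]
    rw [hUV1, show (UV 0) = ((1, 0), (0, 1)) from rfl]
    rw [show ((4 : ℚ) * (1 : ℕ)) • ((ev (1,0))⁻¹ * (ev ((1,4) : ℤ × ℤ))⁻¹)
        = ((4 * 1 : ℕ) : Qfield) * ((ev (1,0))⁻¹ * (ev ((1,4) : ℤ × ℤ))⁻¹) from smul4 1 _]
    simp only [ev_def, hev10]
    have n1 : A0 + 4 * A1 ≠ 0 := by
      have := lin_ne 1 4 (Or.inl one_ne_zero); push_cast at this; simpa using this
    push_cast
    norm_num
    have n1' : A0 + A1 * 4 ≠ 0 := by rwa [mul_comm]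
    field_simp [n1]
    ring
  | succ n hn ih =>
    obtain ⟨k, rfl⟩ : ∃ k, n = k + 1 := ⟨n - 1, by omega⟩
    rw [show 2 * (k + 1 + 1) = 2 * (k + 1) + 1 + 1 from by ring,
      Finset.sum_range_succ, Finset.sum_range_succ, ih,
      show 2 * (k + 1) - 1 = 2 * k + 1 from by omega,
      show 2 * (k + 1) + 1 + 1 - 1 = 2 * (k + 1) + 1 from by omega]
    simp only [sseq_u, sseq_v]
    rw [(UV_val (k + 1)).1, (UV_val (k + 1)).2, (UV_val k).2]
    rw [smul4, smul4]
    simp only [ev_def, hev10]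
    have n1 : (2*(k:Qfield)+1)*A0 + (4*(k:Qfield)+4)*A1 ≠ 0 := by
      have h' := lin_ne (2*(k:ℤ)+1) (4*(k:ℤ)+4) (Or.inl (by omega))
      have e : ((2*(k:ℤ)+1 : ℤ) : Qfield) * A0 + ((4*(k:ℤ)+4 : ℤ) : Qfield) * A1
          = (2*(k:Qfield)+1)*A0 + (4*(k:Qfield)+4)*A1 := by push_cast; ring
      rwa [e] at h'
    have n3 : ((k:Qfield)+1)*A0 + (2*((k:Qfield)+1)+1)*A1 ≠ 0 := by
      have h' := lin_ne ((k:ℤ)+1) (2*((k:ℤ)+1)+1) (Or.inl (by omega))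
      have e : (((k:ℤ)+1 : ℤ) : Qfield) * A0 + ((2*((k:ℤ)+1)+1 : ℤ) : Qfield) * A1
          = ((k:Qfield)+1)*A0 + (2*((k:Qfield)+1)+1)*A1 := by push_cast; ring
      rwa [e] at h'
    have n4 : (2*((k:Qfield)+1)+1)*A0 + (4*((k:Qfield)+1)+4)*A1 ≠ 0 := by
      have h' := lin_ne (2*((k:ℤ)+1)+1) (4*((k:ℤ)+1)+4) (Or.inl (by omega))
      have e : ((2*((k:ℤ)+1)+1 : ℤ) : Qfield) * A0 + ((4*((k:ℤ)+1)+4 : ℤ) : Qfield) * A1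
          = (2*((k:Qfield)+1)+1)*A0 + (4*((k:Qfield)+1)+4)*A1 := by push_cast; ring
      rwa [e] at h'
    push_cast
    linear_combination key_field A0 A1 ((k : ℕ) : Qfield) hx n1 n3 n4

end
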